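/- The Hashin–Shtrikman feasible set F_HS in the product space of volume fractions and Kelvin–Mandel elasticity matrices is not convex: the pairs (0, M(κ⁻,μ⁻)) and (1, M(κ⁺,μ⁺)) belong to F_HS, yet for every θ ∈ (0,1) the convex combination (θ, (1−θ)·M(κ⁻,μ⁻) + θ·M(κ⁺,μ⁺)) does not belong to F_HS. -/

import Mathlib

open Real

/-- The square root `s = √(1 - t²)`. -/
noncomputable def sHS (t : ℝ) : ℝ := Real.sqrt (1 - t ^ 2)

/-- The Hashin–Shtrikman correction term `q(t; v)` for two well-ordered isotropic
plane-stress phases with bulk moduli `κm < κp` and shear moduli `μm < μp`. -/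
noncomputable def qHS (κm κp μm μp t v : ℝ) : ℝ :=
  if v * (κp - κm) * t ≤ (κp + μp - (κp - κm) * v) * sHS t ∧
     v * (μp - μm) * sHS t ≤ (κp + μp - (μp - μm) * v) * t then
    v * (1 - v) * ((κp - κm) * t - (μp - μm) * sHS t) ^ 2 /
      (κp + μp - ((κp - κm) + (μp - μm)) * v)
  else if (κp + μp - (κp - κm) * v) * sHS t < v * (κp - κm) * t then
    (1 - v) * (v * (κp - κm) ^ 2 * t ^ 2 / (κp + μp - (κp - κm) * v)
      - (μp - μm) * (sHS t) ^ 2)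
  else
    (1 - v) * (v * (μp - μm) ^ 2 * (sHS t) ^ 2 / (κp + μp - (μp - μm) * v)
      - (κp - κm) * t ^ 2)

/-- The Hashin–Shtrikman upper-bound function `f^HS(t; v)`:
the Voigt energy minus the correction `q(t; v)`. -/
noncomputable def fHS (κm κp μm μp t v : ℝ) : ℝ :=
  (κm + v * (κp - κm)) * t ^ 2 + (μm + v * (μp - μm)) * (1 - t ^ 2)
    - qHS κm κp μm μp t v

open Matrix

/-- Kelvin–Mandel matrix of the isotropic plane-stress elasticity tensor with
bulk modulus `κ` and shear modulus `μ`. -/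
noncomputable def KM (κ μ : ℝ) : Matrix (Fin 3) (Fin 3) ℝ :=
  !![κ + μ, κ - μ, 0; κ - μ, κ + μ, 0; 0, 0, 2 * μ]

/-- The Hashin–Shtrikman feasible set in the product space of volume fractions
and Kelvin–Mandel elasticity matrices. -/
noncomputable def FHS (κm κp μm μp : ℝ) : Set (ℝ × Matrix (Fin 3) (Fin 3) ℝ) :=
  {p | p.1 ∈ Set.Icc (0 : ℝ) 1 ∧ p.2.IsSymm ∧ (p.2 - KM κm μm).PosSemidef ∧
    ∀ e : Fin 3 → ℝ, (e 0) ^ 2 + (e 1) ^ 2 + (e 2) ^ 2 = 1 / 2 →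
      dotProduct e (p.2.mulVec e) ≤ fHS κm κp μm μp (abs (e 0 + e 1)) p.1}

/-- Nonconvexity of the Hashin–Shtrikman feasible set: the endpoints
`(0, M(κ⁻,μ⁻))` and `(1, M(κ⁺,μ⁺))` belong to `F_HS`, yet no interior convex
combination of them does. -/
lemma KM_symm (κ μ : ℝ) : (KM κ μ).IsSymm := by
  rw [Matrix.IsSymm]
  ext i j
  fin_cases i <;> fin_cases j <;> simp [KM]

lemma energy_KM (κ μ : ℝ) (e : Fin 3 → ℝ) :
    dotProduct e ((KM κ μ).mulVec e)
      = κ * (e 0 + e 1) ^ 2 + μ * ((e 0 - e 1) ^ 2 + 2 * (e 2) ^ 2) := by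
  simp [KM, Matrix.mulVec, dotProduct, Fin.sum_univ_three]
  ring

lemma KM_psd (κ μ : ℝ) (hκ : 0 ≤ κ) (hμ : 0 ≤ μ) : (KM κ μ).PosSemidef := by
  refine Matrix.posSemidef_iff_dotProduct_mulVec.mpr ⟨KM_symm κ μ, fun x => ?_⟩
  simp only [star_trivial]
  rw [energy_KM]
  positivity

lemma energy_eq (κ μ : ℝ) (e : Fin 3 → ℝ)
    (he : e 0 ^ 2 + e 1 ^ 2 + e 2 ^ 2 = 1 / 2) :
    κ * (e 0 + e 1) ^ 2 + μ * ((e 0 - e 1) ^ 2 + 2 * (e 2) ^ 2)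
      = κ * |e 0 + e 1| ^ 2 + μ * (1 - |e 0 + e 1| ^ 2) := by
  rw [sq_abs]; linear_combination 2 * μ * he

lemma qHS_zero (κm κp μm μp t : ℝ) (ht : 0 ≤ t) (h : 0 < κp + μp) :
    qHS κm κp μm μp t 0 = 0 := by
  rw [qHS, if_pos]
  · simp
  constructor
  · have : (0:ℝ) ≤ sHS t := Real.sqrt_nonneg _
    nlinarith
  · nlinarith

lemma qHS_one (κm κp μm μp t : ℝ) : qHS κm κp μm μp t 1 = 0 := by
  rw [qHS]
  split
  · simp
  · split <;> simp

theorem hs_feasible_set_nonconvex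
    (κm κp μm μp : ℝ) (hκm : 0 < κm) (hκ : κm < κp) (hμm : 0 < μm) (hμ : μm < μp) :
    ((0 : ℝ), KM κm μm) ∈ FHS κm κp μm μp ∧
    ((1 : ℝ), KM κp μp) ∈ FHS κm κp μm μp ∧
    ∀ θ : ℝ, θ ∈ Set.Ioo (0 : ℝ) 1 →
      (θ, (1 - θ) • KM κm μm + θ • KM κp μp) ∉ FHS κm κp μm μp := by
  have hκpμp : 0 < κp + μp := by linarith
  refine ⟨⟨⟨le_refl 0, zero_le_one⟩, KM_symm κm μm, ?_, ?_⟩,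
         ⟨⟨zero_le_one, le_refl 1⟩, KM_symm κp μp, ?_, ?_⟩, ?_⟩
  · rw [sub_self]; exact Matrix.PosSemidef.zero
  · intro e he
    dsimp only
    rw [energy_KM, fHS, qHS_zero _ _ _ _ _ (abs_nonneg _) hκpμp,
        energy_eq κm μm e he]
    linarith
  · have : KM κp μp - KM κm μm = KM (κp - κm) (μp - μm) := by
      ext i j; fin_cases i <;> fin_cases j <;> simp [KM] <;> ring
    rw [this]; exact KM_psd _ _ (by linarith) (by linarith)
  · intro e he
    dsimp only
    rw [energy_KM, fHS, qHS_one, energy_eq κp μp e he]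
    linarith
  · rintro θ ⟨hθ0, hθ1⟩ ⟨-, -, -, hineq⟩
    have hcon := hineq ![1/2, 1/2, 0] (by norm_num; rfl)
    have he0 : (![1/2, 1/2, 0] : Fin 3 → ℝ) 0 = 1/2 := rfl
    have he1 : (![1/2, 1/2, 0] : Fin 3 → ℝ) 1 = 1/2 := rfl
    rw [Matrix.add_mulVec, Matrix.smul_mulVec, Matrix.smul_mulVec,
        dotProduct_add, dotProduct_smul, dotProduct_smul,
        energy_KM, energy_KM, he0, he1] at hcon
    have habs : |(1:ℝ)/2 + 1/2| = 1 := by norm_num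
    rw [habs] at hcon
    have hs1 : sHS 1 = 0 := by simp [sHS]
    have hd2 : 0 < κp + μp - (κp - κm) * θ := by nlinarith
    have hq : qHS κm κp μm μp 1 θ = (1 - θ) * (θ * (κp - κm) ^ 2 * 1 ^ 2 /
        (κp + μp - (κp - κm) * θ) - (μp - μm) * (sHS 1) ^ 2) := by
      rw [qHS, if_neg, if_pos]
      · rw [hs1]
        have h1 : 0 < θ * (κp - κm) := by nlinarith
        nlinarith
      · rw [hs1]
        push_neg
        intro h
        exfalso
        have h1 : 0 < θ * (κp - κm) := by nlinarith
        nlinarith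
    dsimp only at hcon
    rw [fHS, hq, hs1] at hcon
    simp only [smul_eq_mul] at hcon
    have hqpos : 0 < (1 - θ) * (θ * (κp - κm) ^ 2 * 1 ^ 2 /
        (κp + μp - (κp - κm) * θ) - (μp - μm) * 0 ^ 2) := by
      have : 0 < θ * (κp - κm) ^ 2 / (κp + μp - (κp - κm) * θ) := by
        have : (0:ℝ) < (κp - κm) ^ 2 := pow_pos (by linarith) 2
        apply div_pos (mul_pos hθ0 this) hd2
      have h1 : (0:ℝ) < 1 - θ := by linarith
      calc (0:ℝ) < (1 - θ) * (θ * (κp - κm) ^ 2 / (κp + μp - (κp - κm) * θ)) :=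
            mul_pos h1 this
        _ = (1 - θ) * (θ * (κp - κm) ^ 2 * 1 ^ 2 /
            (κp + μp - (κp - κm) * θ) - (μp - μm) * 0 ^ 2) := by ring
    have hm : (![1/2, 1/2, 0] : Fin 3 → ℝ) 2 = 0 := rfl
    rw [hm] at hcon
    nlinarith [hcon, hqpos]
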